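/- Let K = k1/k2 ∈ E(y) be nonzero differential-reduced with d1 = deg k1 = deg k2 − 1 = d2 − 1, and suppose τ = −lc(k1)/lc(k2) is a positive integer. Then for every polynomial p ∈ E[y] of degree exactly τ, deg(k2·D(p) + k1·p) < d1 + τ. -/
import Mathlib

open Polynomial

/-- `K = k1/k2` is differential-reduced: `gcd(k2, k1 - i·D(k2)) = 1` for all integers `i`. -/
def DiffReduced {E : Type*} [Field E] (k1 k2 : E[X]) : Prop :=
  ∀ i : ℤ, IsCoprime k2 (k1 - (i : E[X]) * derivative k2)

/-- The derivation `d/dy` on the field of rational functions `E(y)`. -/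
noncomputable def Dr {E : Type*} [Field E] (f : RatFunc E) : RatFunc E :=
  (algebraMap E[X] (RatFunc E) (derivative f.num) * algebraMap E[X] (RatFunc E) f.denom -
      algebraMap E[X] (RatFunc E) f.num * algebraMap E[X] (RatFunc E) (derivative f.denom)) /
    (algebraMap E[X] (RatFunc E) f.denom) ^ 2

theorem stmt_16 {E : Type*} [Field E] [CharZero E] (k1 k2 : E[X]) (hk1 : k1 ≠ 0)
    (hk2 : k2 ≠ 0) (hcop : IsCoprime k1 k2) (hdr : DiffReduced k1 k2)
    (hdeg : k1.natDegree + 1 = k2.natDegree) (τ : ℕ) (hτpos : 0 < τ)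
    (hτ : (τ : E) = -(k1.leadingCoeff / k2.leadingCoeff))
    (p : E[X]) (hp : p.natDegree = τ) (hp0 : p ≠ 0) :
    (k2 * derivative p + k1 * p).degree < ((k1.natDegree + τ : ℕ) : WithBot ℕ) := by
  set N := k1.natDegree + τ with hN
  have hk2l : k2.leadingCoeff ≠ 0 := leadingCoeff_ne_zero.mpr hk2
  have hlck1 : k1.leadingCoeff = -(τ : E) * k2.leadingCoeff := by
    field_simp at hτ
    linear_combination hτ
  have hppos : 0 < p.natDegree := hp ▸ hτpos
  have hdp : (derivative p).natDegree = τ - 1 := by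
    have := degree_derivative_eq p hppos
    have h0 : derivative p ≠ 0 := by
      intro h; rw [h, degree_zero] at this; exact absurd this (by simp)
    have := natDegree_eq_of_degree_eq_some (this.trans (by rw [hp]))
    exact this
  have hndk2 : (k2 * derivative p).natDegree ≤ N := by
    refine natDegree_mul_le.trans ?_
    rw [hdp, ← hdeg, hN]
    omega
  have hndk1 : (k1 * p).natDegree ≤ N := by
    refine natDegree_mul_le.trans ?_
    rw [hp]
  -- coefficient at N is zero
  have hc2 : (k2 * derivative p).coeff N = k2.leadingCoeff * ((τ : E) * p.leadingCoeff) := by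
    have hNeq : N = k2.natDegree + (derivative p).natDegree := by
      rw [hdp, ← hdeg, hN]; omega
    rw [hNeq, coeff_mul_degree_add_degree]
    congr 1
    rw [leadingCoeff, hdp, coeff_derivative]
    have : τ - 1 + 1 = τ := by omega
    simp only [this]
    rw [← hp, coeff_natDegree, mul_comm, hp, Nat.cast_sub hτpos]
    ring
  have hc1 : (k1 * p).coeff N = k1.leadingCoeff * p.leadingCoeff := by
    have hNeq : N = k1.natDegree + p.natDegree := by rw [hp]
    rw [hNeq, coeff_mul_degree_add_degree]
  have hcoeffN : (k2 * derivative p + k1 * p).coeff N = 0 := by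
    rw [coeff_add, hc1, hc2, hlck1]
    ring
  rw [degree_lt_iff_coeff_zero]
  intro m hm
  rcases eq_or_lt_of_le hm with h | h
  · rw [← h]; exact hcoeffN
  · rw [coeff_add, coeff_eq_zero_of_natDegree_lt (lt_of_le_of_lt hndk2 h),
      coeff_eq_zero_of_natDegree_lt (lt_of_le_of_lt hndk1 h), add_zero]
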